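/- arXiv:math/9210208 — 2 statements merged into one kernel-verified Lean document; each statement's English description precedes it below -/
import Mathlib

section
/- For every n ≥ 1 one has δ(L_1[0,1]|W_n, W_n) = L_n, where L_n = ∫_0^1 |D_n(t)| dt is the n-th Lebesgue constant of the Walsh system. -/
open MeasureTheory
open scoped ENNReal

noncomputable section

/-- The Rademacher function `r_{i+1}` of the paper: `r_1(t) = 1` on `[0,1/2) + ℤ`,
`-1` on `[1/2,1) + ℤ`, and `r_{i+1}(t) = r_1(2^i t)`. -/
def rademacher (i : ℕ) (t : ℝ) : ℝ :=
  if Int.fract (2 ^ i * t) < 1 / 2 then 1 else -1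

/-- The `n`-th Walsh function `w_n = ∏_i r_{i+1}^{n_i}` where `n = ∑_i n_i 2^i`. -/
def walsh (n : ℕ) (t : ℝ) : ℝ :=
  ∏ i ∈ Finset.range n, if n.testBit i then rademacher i t else 1

/-- Lebesgue measure on `[0,1]`. -/
def unitI : Measure ℝ := volume.restrict (Set.Icc 0 1)

/-- `f ∈ L_2^X`: `f : [0,1] → X` is (Bochner) measurable with `∫_0^1 ‖f(t)‖² dt < ∞`. -/
def MemL2 {X : Type*} [NormedAddCommGroup X] (f : ℝ → X) : Prop := MemLp f 2 unitI

/-- `‖f‖_2 = (∫_0^1 ‖f(t)‖² dt)^{1/2}`. -/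
def l2norm {X : Type*} [NormedAddCommGroup X] (f : ℝ → X) : ℝ :=
  Real.sqrt (∫ t, ‖f t‖ ^ 2 ∂unitI)

/-- The Walsh–Fourier coefficient `⟨f, w_i⟩ = ∫_0^1 f(t) w_i(t) dt`. -/
def walshCoeff {X : Type*} [NormedAddCommGroup X] [NormedSpace ℝ X] (f : ℝ → X) (i : ℕ) : X :=
  ∫ t, walsh i t • f t ∂unitI

/-- The `n`-th Walsh partial sum `S_n(f) = ∑_{i<n} ⟨f,w_i⟩ w_i`. -/
def walshSum {X : Type*} [NormedAddCommGroup X] [NormedSpace ℝ X] (n : ℕ) (f : ℝ → X) :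
    ℝ → X :=
  fun t => ∑ i ∈ Finset.range n, walsh i t • walshCoeff f i

/-- The ideal norm `δ(T | W_n, W_n)`: the least `c ≥ 0` with
`‖T ∘ S_n(f)‖_2 ≤ c ‖f‖_2` for all `f ∈ L_2^X`. -/
def walshDelta {X Y : Type*} [NormedAddCommGroup X] [NormedSpace ℝ X]
    [NormedAddCommGroup Y] [NormedSpace ℝ Y] (T : X →L[ℝ] Y) (n : ℕ) : ℝ :=
  sInf {c : ℝ | 0 ≤ c ∧ ∀ f : ℝ → X, MemL2 f →
    l2norm (fun t => T (walshSum n f t)) ≤ c * l2norm f}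

/-- The `n`-th Walsh–Dirichlet kernel `D_n = ∑_{i<n} w_i`. -/
def dirichlet (n : ℕ) (t : ℝ) : ℝ := ∑ i ∈ Finset.range n, walsh i t

/-- The `n`-th Lebesgue constant `L_n = ∫_0^1 |D_n(t)| dt` of the Walsh system. -/
def lebesgueConst (n : ℕ) : ℝ := ∫ t, |dirichlet n t| ∂unitI

namespace WalshAux

def J (k a : ℕ) : Set ℝ := Set.Ico ((a : ℝ) / 2 ^ k) (((a : ℝ) + 1) / 2 ^ k)

lemma rademacher_J {j k a : ℕ} (hj : j < k) {t : ℝ} (ht : t ∈ J k a) :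
    rademacher j t = if a.testBit (k - 1 - j) then -1 else 1 := by
  set m := k - j with hm
  have hm1 : 1 ≤ m := by omega
  have hkj : k = j + m := by omega
  set q := a / 2 ^ m with hq
  set r := a % 2 ^ m with hr
  have hqr : ((q * 2 ^ m + r : ℕ) : ℝ) = (a : ℝ) := by
    rw [mul_comm]; rw [Nat.div_add_mod]
  push_cast at hqr
  have hrlt : r < 2 ^ m := Nat.mod_lt _ (by positivity)
  have h2k : (2 : ℝ) ^ k = 2 ^ j * 2 ^ m := by rw [hkj, pow_add]
  have hpm : (0 : ℝ) < 2 ^ m := by positivity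
  have hpj : (0 : ℝ) < 2 ^ j := by positivity
  have hpk : (0 : ℝ) < 2 ^ k := by positivity
  obtain ⟨ht1, ht2⟩ := ht
  have key1 : (q : ℝ) + (r : ℝ) / 2 ^ m = 2 ^ j * ((a : ℝ) / 2 ^ k) := by
    rw [h2k, ← hqr]; field_simp
  have key2 : (q : ℝ) + ((r : ℝ) + 1) / 2 ^ m = 2 ^ j * (((a : ℝ) + 1) / 2 ^ k) := by
    rw [h2k, ← hqr]; field_simp; ring
  have hb1 : (q : ℝ) + (r : ℝ) / 2 ^ m ≤ 2 ^ j * t := by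
    rw [key1]; exact mul_le_mul_of_nonneg_left ht1 hpj.le
  have hb2 : 2 ^ j * t < (q : ℝ) + ((r : ℝ) + 1) / 2 ^ m := by
    rw [key2]; exact (mul_lt_mul_iff_right₀ hpj).2 ht2
  have hfr : Int.fract (2 ^ j * t) = 2 ^ j * t - q := by
    have hfl : ⌊(2 : ℝ) ^ j * t⌋ = (q : ℤ) := by
      apply Int.floor_eq_iff.2
      constructor
      · push_cast
        have : (0 : ℝ) ≤ (r : ℝ) / 2 ^ m := by positivity
        linarith
      · push_cast
        have : ((r : ℝ) + 1) / 2 ^ m ≤ 1 := by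
          rw [div_le_one hpm]
          have : (r : ℝ) + 1 ≤ 2 ^ m := by exact_mod_cast Nat.succ_le_of_lt hrlt
          linarith
        linarith
    rw [Int.fract, hfl]
    push_cast; ring
  have hbit : a.testBit (k - 1 - j) = r.testBit (m - 1) := by
    have h1 : k - 1 - j = m - 1 := by omega
    rw [h1, hr, Nat.testBit_mod_two_pow]
    simp [show m - 1 < m by omega]
  have hpow : 2 ^ m = 2 ^ (m - 1) * 2 := by rw [← pow_succ]; congr 1; omega
  simp only [rademacher, hfr, hbit]
  rcases hb : r.testBit (m - 1) with _ | _
  · -- bit false : r < 2^(m-1)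
    have hrsmall : r < 2 ^ (m - 1) := by
      by_contra hge
      push_neg at hge
      have h2 : r / 2 ^ (m - 1) < 2 :=
        (Nat.div_lt_iff_lt_mul (by positivity)).2 (by omega)
      have h1 : 1 ≤ r / 2 ^ (m - 1) :=
        (Nat.one_le_div_iff (by positivity)).2 hge
      have heq : r / 2 ^ (m - 1) = 1 := by omega
      rw [Nat.testBit_eq_decide_div_mod_eq, heq] at hb
      simp at hb
    have hcr : (r : ℝ) + 1 ≤ 2 ^ (m - 1) := by exact_mod_cast Nat.succ_le_of_lt hrsmall
    have hcpow : (2 : ℝ) ^ m = 2 ^ (m - 1) * 2 := by exact_mod_cast hpow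
    have hhalf : ((r : ℝ) + 1) / 2 ^ m ≤ 1 / 2 := by
      rw [div_le_div_iff₀ hpm (by norm_num)]
      nlinarith
    rw [if_pos (by linarith)]
    simp
  · -- bit true : r ≥ 2^(m-1)
    have hge : 2 ^ (m - 1) ≤ r := Nat.ge_two_pow_of_testBit hb
    have hcr : (2 : ℝ) ^ (m - 1) ≤ r := by exact_mod_cast hge
    have hcpow : (2 : ℝ) ^ m = 2 ^ (m - 1) * 2 := by exact_mod_cast hpow
    have hhalf : (1 : ℝ) / 2 ≤ (r : ℝ) / 2 ^ m := by
      rw [div_le_div_iff₀ (by norm_num) hpm]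
      nlinarith
    rw [if_neg (by push_neg; linarith)]
    simp


def wv (k i a : ℕ) : ℝ :=
  ∏ j ∈ Finset.range k, if i.testBit j && a.testBit (k - 1 - j) then -1 else 1

lemma walsh_eq_prod {i M : ℕ} (hi : i < 2 ^ M) (t : ℝ) :
    walsh i t = ∏ j ∈ Finset.range M, if i.testBit j then rademacher j t else 1 := by
  have key : ∀ M' L : ℕ, i < 2 ^ M' → M' ≤ L →
      (∏ j ∈ Finset.range L, if i.testBit j then rademacher j t else 1) =
      ∏ j ∈ Finset.range M', if i.testBit j then rademacher j t else 1 := by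
    intro M' L hiM hML
    refine (Finset.prod_subset (Finset.range_subset_range.2 hML) ?_).symm
    intro j _ hj
    simp only [Finset.mem_range, not_lt] at hj
    have : i.testBit j = false :=
      Nat.testBit_lt_two_pow (lt_of_lt_of_le hiM (Nat.pow_le_pow_right (by norm_num) hj))
    simp [this]
  rw [walsh, ← key i (max i M) Nat.lt_two_pow_self (le_max_left _ _),
    key M (max i M) hi (le_max_right _ _)]

lemma walsh_J {k i a : ℕ} (hi : i < 2 ^ k) {t : ℝ} (ht : t ∈ J k a) :
    walsh i t = wv k i a := by
  rw [walsh_eq_prod hi, wv]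
  refine Finset.prod_congr rfl fun j hj => ?_
  rw [Finset.mem_range] at hj
  rw [rademacher_J hj ht]
  rcases hb1 : i.testBit j <;> rcases hb2 : a.testBit (k - 1 - j) <;> simp

lemma wv_mul (k i a b : ℕ) : wv k i a * wv k i b = wv k i (a ^^^ b) := by
  rw [wv, wv, wv, ← Finset.prod_mul_distrib]
  refine Finset.prod_congr rfl fun j _ => ?_
  rw [Nat.testBit_xor]
  rcases i.testBit j <;> rcases a.testBit (k - 1 - j) <;> rcases b.testBit (k - 1 - j) <;> simp

lemma abs_wv (k i a : ℕ) : |wv k i a| = 1 := by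
  have : wv k i a * wv k i a = 1 := by
    rw [wv, ← Finset.prod_mul_distrib]
    refine Finset.prod_eq_one fun j _ => ?_
    rcases (i.testBit j && a.testBit (k - 1 - j)) <;> norm_num
  rcases mul_self_eq_one_iff.1 this with h | h <;> rw [h] <;> norm_num


lemma measurableSet_J (k a : ℕ) : MeasurableSet (J k a) := measurableSet_Ico

lemma J_subset_Ico {k a : ℕ} (ha : a < 2 ^ k) : J k a ⊆ Set.Ico (0 : ℝ) 1 := by
  intro t ht
  obtain ⟨h1, h2⟩ := ht
  have hpk : (0 : ℝ) < 2 ^ k := by positivity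
  constructor
  · exact le_trans (by positivity) h1
  · refine lt_of_lt_of_le h2 ?_
    rw [div_le_one hpk]
    have : (a : ℝ) + 1 ≤ 2 ^ k := by exact_mod_cast Nat.succ_le_of_lt ha
    linarith

lemma J_subset_Icc {k a : ℕ} (ha : a < 2 ^ k) : J k a ⊆ Set.Icc (0 : ℝ) 1 :=
  (J_subset_Ico ha).trans Set.Ico_subset_Icc_self

lemma volume_J (k a : ℕ) : volume (J k a) = ENNReal.ofReal ((2 ^ k : ℝ)⁻¹) := by
  rw [J, Real.volume_Ico]
  congr 1
  have hpk : (0 : ℝ) < 2 ^ k := by positivity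
  field_simp
  ring

lemma unitI_J {k a : ℕ} (ha : a < 2 ^ k) : unitI (J k a) = ENNReal.ofReal ((2 ^ k : ℝ)⁻¹) := by
  rw [unitI, Measure.restrict_apply (measurableSet_J k a),
    Set.inter_eq_left.2 (J_subset_Icc ha), volume_J]

lemma unitI_J_ne_top {k a : ℕ} (ha : a < 2 ^ k) : unitI (J k a) ≠ ∞ := by
  rw [unitI_J ha]; exact ENNReal.ofReal_ne_top

lemma J_disjoint {k a b : ℕ} (hab : a ≠ b) : Disjoint (J k a) (J k b) := by
  have hpk : (0 : ℝ) < 2 ^ k := by positivity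
  have key : ∀ a b : ℕ, a < b → Disjoint (J k a) (J k b) := by
    intro a b h
    apply Set.Ico_disjoint_Ico.2
    refine le_trans (min_le_left _ _) (le_trans ?_ (le_max_right _ _))
    rw [div_le_div_iff₀ hpk hpk]
    have : (a : ℝ) + 1 ≤ b := by exact_mod_cast h
    nlinarith
  rcases hab.lt_or_gt with h | h
  · exact key a b h
  · exact (key b a h).symm

lemma J_union (k : ℕ) : (⋃ a ∈ Finset.range (2 ^ k), J k a) = Set.Ico (0 : ℝ) 1 := by
  apply Set.Subset.antisymm
  · intro t ht
    simp only [Set.mem_iUnion] at ht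
    obtain ⟨a, ha, hta⟩ := ht
    exact J_subset_Ico (Finset.mem_range.1 ha) hta
  · intro t ht
    obtain ⟨h0, h1⟩ := ht
    have hpk : (0 : ℝ) < 2 ^ k := by positivity
    set a := ⌊(2 : ℝ) ^ k * t⌋.toNat with ha
    have h2kt : (0 : ℝ) ≤ 2 ^ k * t := by positivity
    have hfl : (⌊(2 : ℝ) ^ k * t⌋ : ℝ) = (a : ℝ) := by
      rw [ha]; exact_mod_cast (Int.toNat_of_nonneg (Int.floor_nonneg.2 h2kt)).symm
    have hle : (a : ℝ) ≤ 2 ^ k * t := by rw [← hfl]; exact Int.floor_le _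
    have hlt : 2 ^ k * t < (a : ℝ) + 1 := by rw [← hfl]; exact Int.lt_floor_add_one _
    have haK : a < 2 ^ k := by
      have : (a : ℝ) < 2 ^ k := by nlinarith
      exact_mod_cast this
    simp only [Set.mem_iUnion]
    exact ⟨a, Finset.mem_range.2 haK,
      ⟨by rw [div_le_iff₀ hpk]; linarith, by rw [lt_div_iff₀ hpk]; linarith⟩⟩


instance : IsFiniteMeasure unitI := by
  constructor
  rw [unitI, Measure.restrict_apply_univ, Real.volume_Icc]
  norm_num

lemma integral_unitI_eq_sum {E : Type*} [NormedAddCommGroup E] [NormedSpace ℝ E] (k : ℕ)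
    {h : ℝ → E} (hi : ∀ b ∈ Finset.range (2 ^ k), IntegrableOn h (J k b)) :
    ∫ t, h t ∂unitI = ∑ b ∈ Finset.range (2 ^ k), ∫ t in J k b, h t := by
  have h0 : ∫ t, h t ∂unitI = ∫ t in Set.Icc (0 : ℝ) 1, h t := rfl
  rw [h0, integral_Icc_eq_integral_Ico, ← J_union k,
    integral_biUnion_finset _ (fun b _ => measurableSet_J k b)
      (fun a _ b _ hab => J_disjoint hab) hi]

lemma integral_unitI_step (k : ℕ) {h : ℝ → ℝ} {c : ℕ → ℝ}
    (hc : ∀ b, b < 2 ^ k → ∀ t ∈ J k b, h t = c b) :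
    ∫ t, h t ∂unitI = (∑ b ∈ Finset.range (2 ^ k), c b) / 2 ^ k := by
  have hint : ∀ b ∈ Finset.range (2 ^ k), IntegrableOn h (J k b) := by
    intro b hb
    rw [Finset.mem_range] at hb
    have hcst : IntegrableOn (fun _ => c b) (J k b) volume :=
      integrableOn_const (by rw [volume_J]; exact ENNReal.ofReal_ne_top)
    exact hcst.congr_fun (fun t ht => (hc b hb t ht).symm) (measurableSet_J k b)
  rw [integral_unitI_eq_sum k hint, Finset.sum_div]
  refine Finset.sum_congr rfl fun b hb => ?_
  rw [Finset.mem_range] at hb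
  rw [setIntegral_congr_fun (measurableSet_J k b) (fun t ht => hc b hb t ht),
    setIntegral_const, measureReal_def, volume_J, ENNReal.toReal_ofReal (by positivity), smul_eq_mul]
  rw [div_eq_inv_mul]

lemma sum_xor {M : Type*} [AddCommMonoid M] {k a : ℕ} (ha : a < 2 ^ k) (F : ℕ → M) :
    ∑ b ∈ Finset.range (2 ^ k), F (a ^^^ b) = ∑ y ∈ Finset.range (2 ^ k), F y := by
  refine Finset.sum_nbij' (fun b => a ^^^ b) (fun y => a ^^^ y) ?_ ?_ ?_ ?_ ?_ <;>
    intro x hx <;> simp only [Finset.mem_range] at * <;>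
    first
      | exact Nat.xor_lt_two_pow ha hx
      | simp [← Nat.xor_assoc]

lemma lebesgueConst_nonneg (n : ℕ) : 0 ≤ lebesgueConst n :=
  integral_nonneg fun t => abs_nonneg _

def dn (n k b : ℕ) : ℝ := ∑ i ∈ Finset.range n, wv k i b

lemma dirichlet_J {n k b : ℕ} (hn : n ≤ 2 ^ k) {t : ℝ} (ht : t ∈ J k b) :
    dirichlet n t = dn n k b := by
  rw [dirichlet, dn]
  exact Finset.sum_congr rfl fun i hi =>
    walsh_J (lt_of_lt_of_le (Finset.mem_range.1 hi) hn) ht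

lemma lebesgueConst_eq {n k : ℕ} (hn : n ≤ 2 ^ k) :
    lebesgueConst n = (∑ b ∈ Finset.range (2 ^ k), |dn n k b|) / 2 ^ k := by
  rw [lebesgueConst]
  exact integral_unitI_step k fun b hb t ht => by rw [dirichlet_J hn ht]


lemma measurable_walsh (i : ℕ) : Measurable (walsh i) := by
  apply Finset.measurable_prod
  intro j _
  by_cases h : i.testBit j
  · simp only [h, if_true]
    unfold rademacher
    exact Measurable.ite
      (measurableSet_lt ((measurable_const.mul measurable_id).fract) measurable_const)
      measurable_const measurable_const
  · simp only [h, if_false]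
    exact measurable_const

lemma abs_walsh_le_one (i : ℕ) (t : ℝ) : |walsh i t| ≤ 1 := by
  rw [walsh, Finset.abs_prod]
  apply Finset.prod_le_one (fun j _ => abs_nonneg _)
  intro j _
  by_cases h : i.testBit j <;> simp only [h, if_true, if_false]
  · unfold rademacher
    split <;> norm_num
  · norm_num

lemma memLtop_walsh (i : ℕ) : MemLp (walsh i) ∞ unitI :=
  memLp_top_of_bound (measurable_walsh i).aestronglyMeasurable 1
    (Filter.Eventually.of_forall fun t => by
      rw [Real.norm_eq_abs]; exact abs_walsh_le_one i t)

lemma sq_setIntegral_le {k b : ℕ} {u : ℝ → ℝ}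
    (hu : IntegrableOn u (J k b)) (hu2 : IntegrableOn (fun x => u x ^ 2) (J k b)) :
    (∫ x in J k b, u x) ^ 2 ≤ (∫ x in J k b, u x ^ 2) / 2 ^ k := by
  set m : ℝ := ((2 : ℝ) ^ k)⁻¹ with hmdef
  have hm : (0 : ℝ) < m := by positivity
  set I := ∫ x in J k b, u x with hI
  set S := ∫ x in J k b, u x ^ 2 with hS
  set c : ℝ := I / m with hc
  have hcm : c * m = I := div_mul_cancel₀ _ hm.ne'
  have hmeas : (volume (J k b)).toReal = m := by
    rw [volume_J, ENNReal.toReal_ofReal hm.le]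
  have h0 : 0 ≤ ∫ x in J k b, (u x - c) ^ 2 :=
    setIntegral_nonneg (measurableSet_J k b) fun x _ => sq_nonneg _
  have hexp : ∫ x in J k b, (u x - c) ^ 2 = S - 2 * c * I + c ^ 2 * m := by
    have hfun : ∀ x, (u x - c) ^ 2 = u x ^ 2 - 2 * c * u x + c ^ 2 := fun x => by ring
    simp_rw [hfun]
    have hsub : IntegrableOn (fun x => u x ^ 2 - 2 * c * u x) (J k b) volume :=
      hu2.sub (hu.const_mul (2 * c))
    rw [integral_add hsub
      (integrableOn_const (by rw [volume_J]; exact ENNReal.ofReal_ne_top)),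
      integral_sub hu2 (hu.const_mul (2 * c)), integral_const_mul, setIntegral_const,
      measureReal_def, hmeas, smul_eq_mul, mul_comm (c ^ 2)]
  have hc2m : c ^ 2 * m = c * I := by rw [pow_two, mul_assoc, hcm]
  have hSc : c * I ≤ S := by nlinarith [h0, hexp]
  have hI2 : I ^ 2 = c * I * m := by rw [← hcm]; ring
  calc I ^ 2 = c * I * m := hI2
    _ ≤ S * m := mul_le_mul_of_nonneg_right hSc hm.le
    _ = S / 2 ^ k := by rw [hmdef, div_eq_mul_inv]


lemma upper {n k : ℕ} (hn : n ≤ 2 ^ k) {X : Type*} [NormedAddCommGroup X] [NormedSpace ℝ X]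
    [CompleteSpace X] {f : ℝ → X} (hf : MemL2 f) :
    l2norm (walshSum n f) ≤ lebesgueConst n * l2norm f := by
  classical
  have hfi : Integrable f unitI := hf.integrable one_le_two
  have hfn : Integrable (fun t => ‖f t‖) unitI := hfi.norm
  have hfn2 : Integrable (fun t => ‖f t‖ ^ 2) unitI := by
    have h := hf.integrable_norm_rpow two_ne_zero ENNReal.ofNat_ne_top
    have h2 : (2 : ℝ≥0∞).toReal = ((2 : ℕ) : ℝ) := by simp
    simp_rw [h2, Real.rpow_natCast] at h
    simpa using h
  have hfnJ : ∀ b, b < 2 ^ k → IntegrableOn (fun t => ‖f t‖) (J k b) volume := by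
    intro b hb
    have h0 : IntegrableOn (fun t => ‖f t‖) (Set.Icc (0 : ℝ) 1) volume := hfn
    exact h0.mono_set (J_subset_Icc hb)
  have hfn2J : ∀ b, b < 2 ^ k → IntegrableOn (fun t => ‖f t‖ ^ 2) (J k b) volume := by
    intro b hb
    have h0 : IntegrableOn (fun t => ‖f t‖ ^ 2) (Set.Icc (0 : ℝ) 1) volume := hfn2
    exact h0.mono_set (J_subset_Icc hb)
  have hci : ∀ i : ℕ, Integrable (fun s => walsh i s • f s) unitI := fun i =>
    hfi.smul_of_top_right (memLtop_walsh i)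
  set L := lebesgueConst n with hL
  have hL0 : 0 ≤ L := lebesgueConst_nonneg n
  set V : ℕ → X := fun a => ∑ i ∈ Finset.range n, wv k i a • walshCoeff f i with hV
  set K : ℕ → ℝ → ℝ := fun a s => ∑ i ∈ Finset.range n, wv k i a * walsh i s with hK
  set w : ℕ → ℝ := fun b => ∫ s in J k b, ‖f s‖ with hw
  set q : ℕ → ℝ := fun b => ∫ s in J k b, ‖f s‖ ^ 2 with hq
  have hwnn : ∀ b, 0 ≤ w b := fun b =>
    setIntegral_nonneg (measurableSet_J k b) fun x _ => norm_nonneg _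
  -- walshSum is the step function V
  have hSJ : ∀ a, a < 2 ^ k → ∀ t ∈ J k a, walshSum n f t = V a := by
    intro a ha t ht
    rw [walshSum, hV]
    exact Finset.sum_congr rfl fun i hi => by
      rw [walsh_J (lt_of_lt_of_le (Finset.mem_range.1 hi) hn) ht]
  -- V as an integral against the kernel
  have hVint : ∀ a, V a = ∫ s, K a s • f s ∂unitI := by
    intro a
    calc V a = ∑ i ∈ Finset.range n, ∫ s, wv k i a • (walsh i s • f s) ∂unitI := by
          refine Finset.sum_congr rfl fun i _ => ?_
          rw [integral_smul, walshCoeff]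
      _ = ∫ s, ∑ i ∈ Finset.range n, wv k i a • (walsh i s • f s) ∂unitI :=
          (integral_finset_sum _ fun i _ => ((hci i).smul (wv k i a))).symm
      _ = ∫ s, K a s • f s ∂unitI := by
          refine integral_congr_ae (Filter.Eventually.of_forall fun s => ?_)
          simp only [hK, Finset.sum_smul, smul_smul]
  -- kernel is a step function
  have hKJ : ∀ a b, b < 2 ^ k → ∀ s ∈ J k b, K a s = dn n k (a ^^^ b) := by
    intro a b hb s hs
    rw [hK, dn]
    refine Finset.sum_congr rfl fun i hi => ?_
    rw [walsh_J (lt_of_lt_of_le (Finset.mem_range.1 hi) hn) hs, wv_mul]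
  -- norm bound for V a
  have hVnorm : ∀ a, ‖V a‖ ≤ ∑ b ∈ Finset.range (2 ^ k), |dn n k (a ^^^ b)| * w b := by
    intro a
    have hIob : ∀ b ∈ Finset.range (2 ^ k),
        IntegrableOn (fun s => ‖K a s • f s‖) (J k b) volume := by
      intro b hb
      rw [Finset.mem_range] at hb
      have hmul : IntegrableOn (fun s => |dn n k (a ^^^ b)| * ‖f s‖) (J k b) volume :=
        (hfnJ b hb).const_mul _
      refine hmul.congr_fun ?_ (measurableSet_J k b)
      intro s hs
      show |dn n k (a ^^^ b)| * ‖f s‖ = ‖K a s • f s‖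
      rw [norm_smul, Real.norm_eq_abs, hKJ a b hb s hs]
    calc ‖V a‖ = ‖∫ s, K a s • f s ∂unitI‖ := by rw [hVint]
      _ ≤ ∫ s, ‖K a s • f s‖ ∂unitI := norm_integral_le_integral_norm _
      _ = ∑ b ∈ Finset.range (2 ^ k), ∫ s in J k b, ‖K a s • f s‖ :=
          integral_unitI_eq_sum k hIob
      _ = ∑ b ∈ Finset.range (2 ^ k), |dn n k (a ^^^ b)| * w b := by
          refine Finset.sum_congr rfl fun b hb => ?_
          rw [Finset.mem_range] at hb
          rw [setIntegral_congr_fun (measurableSet_J k b)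
            (fun s hs => by rw [norm_smul, Real.norm_eq_abs, hKJ a b hb s hs]),
            integral_const_mul]
  -- the integral of ‖walshSum‖² as a finite sum
  have hT : ∫ t, ‖walshSum n f t‖ ^ 2 ∂unitI
      = (∑ a ∈ Finset.range (2 ^ k), ‖V a‖ ^ 2) / 2 ^ k :=
    integral_unitI_step k fun a ha t ht => by rw [hSJ a ha t ht]
  -- discrete Schur estimate
  set Sg : ℝ := ∑ y ∈ Finset.range (2 ^ k), |dn n k y| with hSgdef
  have hSgnn : 0 ≤ Sg := Finset.sum_nonneg fun y _ => abs_nonneg _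
  have hrow : ∀ a, a < 2 ^ k → ∑ b ∈ Finset.range (2 ^ k), |dn n k (a ^^^ b)| = Sg :=
    fun a ha => sum_xor ha fun y => |dn n k y|
  have hcol : ∀ b, b < 2 ^ k → ∑ a ∈ Finset.range (2 ^ k), |dn n k (a ^^^ b)| = Sg := by
    intro b hb
    have : ∀ a, |dn n k (a ^^^ b)| = |dn n k (b ^^^ a)| := fun a => by rw [Nat.xor_comm]
    simp_rw [this]
    exact sum_xor hb fun y => |dn n k y|
  have hLe : L = Sg / 2 ^ k := lebesgueConst_eq hn
  have hCS : ∀ a, a < 2 ^ k →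
      (∑ b ∈ Finset.range (2 ^ k), |dn n k (a ^^^ b)| * w b) ^ 2
        ≤ Sg * ∑ b ∈ Finset.range (2 ^ k), |dn n k (a ^^^ b)| * w b ^ 2 := by
    intro a ha
    have h := Finset.sum_mul_sq_le_sq_mul_sq (Finset.range (2 ^ k))
      (fun b => Real.sqrt |dn n k (a ^^^ b)|) (fun b => Real.sqrt |dn n k (a ^^^ b)| * w b)
    have e1 : ∀ b, Real.sqrt |dn n k (a ^^^ b)| * (Real.sqrt |dn n k (a ^^^ b)| * w b)
        = |dn n k (a ^^^ b)| * w b := fun b => by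
      rw [← mul_assoc, Real.mul_self_sqrt (abs_nonneg _)]
    have e2 : ∀ b, Real.sqrt |dn n k (a ^^^ b)| ^ 2 = |dn n k (a ^^^ b)| := fun b =>
      Real.sq_sqrt (abs_nonneg _)
    have e3 : ∀ b, (Real.sqrt |dn n k (a ^^^ b)| * w b) ^ 2 = |dn n k (a ^^^ b)| * w b ^ 2 :=
      fun b => by rw [mul_pow, Real.sq_sqrt (abs_nonneg _)]
    simp_rw [e1, e2, e3] at h
    rw [hrow a ha] at h
    exact h
  have hwq : ∀ b, b < 2 ^ k → w b ^ 2 ≤ q b / 2 ^ k := fun b hb =>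
    sq_setIntegral_le (hfnJ b hb) (hfn2J b hb)
  have hA : ∑ b ∈ Finset.range (2 ^ k), q b = ∫ t, ‖f t‖ ^ 2 ∂unitI :=
    (integral_unitI_eq_sum k fun b hb => hfn2J b (Finset.mem_range.1 hb)).symm
  have hAnn : 0 ≤ ∫ t, ‖f t‖ ^ 2 ∂unitI := integral_nonneg fun t => sq_nonneg _
  have hqnn : ∀ b, 0 ≤ q b := fun b =>
    setIntegral_nonneg (measurableSet_J k b) fun x _ => sq_nonneg _
  -- main chain
  have hmain : ∫ t, ‖walshSum n f t‖ ^ 2 ∂unitI ≤ L ^ 2 * ∫ t, ‖f t‖ ^ 2 ∂unitI := by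
    rw [hT]
    have hp : (0 : ℝ) < 2 ^ k := by positivity
    have step1 : ∑ a ∈ Finset.range (2 ^ k), ‖V a‖ ^ 2
        ≤ ∑ a ∈ Finset.range (2 ^ k),
            Sg * ∑ b ∈ Finset.range (2 ^ k), |dn n k (a ^^^ b)| * w b ^ 2 := by
      refine Finset.sum_le_sum fun a ha => ?_
      rw [Finset.mem_range] at ha
      refine le_trans ?_ (hCS a ha)
      have h1 : ‖V a‖ ≤ ∑ b ∈ Finset.range (2 ^ k), |dn n k (a ^^^ b)| * w b := hVnorm a
      have h2 : (0 : ℝ) ≤ ‖V a‖ := norm_nonneg _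
      nlinarith
    have step2 : ∑ a ∈ Finset.range (2 ^ k),
          Sg * ∑ b ∈ Finset.range (2 ^ k), |dn n k (a ^^^ b)| * w b ^ 2
        = Sg * Sg * ∑ b ∈ Finset.range (2 ^ k), w b ^ 2 := by
      rw [← Finset.mul_sum, Finset.sum_comm, mul_assoc]
      congr 1
      rw [Finset.mul_sum]
      refine Finset.sum_congr rfl fun b hb => ?_
      rw [← Finset.sum_mul, hcol b (Finset.mem_range.1 hb)]
    have step3 : ∑ b ∈ Finset.range (2 ^ k), w b ^ 2
        ≤ (∑ b ∈ Finset.range (2 ^ k), q b) / 2 ^ k := by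
      rw [Finset.sum_div]
      exact Finset.sum_le_sum fun b hb => hwq b (Finset.mem_range.1 hb)
    calc (∑ a ∈ Finset.range (2 ^ k), ‖V a‖ ^ 2) / 2 ^ k
        ≤ (Sg * Sg * ∑ b ∈ Finset.range (2 ^ k), w b ^ 2) / 2 ^ k := by
          rw [div_le_div_iff₀ hp hp]
          nlinarith [step1, step2.le, step2.ge]
      _ ≤ (Sg * Sg * ((∑ b ∈ Finset.range (2 ^ k), q b) / 2 ^ k)) / 2 ^ k := by
          refine (div_le_div_iff_of_pos_right hp).2 ?_
          exact mul_le_mul_of_nonneg_left step3 (mul_nonneg hSgnn hSgnn)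
      _ = L ^ 2 * ∫ t, ‖f t‖ ^ 2 ∂unitI := by
          rw [hLe, hA]
          field_simp
  -- conclude with square roots
  rw [l2norm, l2norm]
  calc Real.sqrt (∫ t, ‖walshSum n f t‖ ^ 2 ∂unitI)
      ≤ Real.sqrt (L ^ 2 * ∫ t, ‖f t‖ ^ 2 ∂unitI) := Real.sqrt_le_sqrt hmain
    _ = L * Real.sqrt (∫ t, ‖f t‖ ^ 2 ∂unitI) := by
        rw [Real.sqrt_mul (sq_nonneg L), Real.sqrt_sq hL0]


-- Lower bound construction
lemma Lp_coeFn_sum {ι : Type*} (s : Finset ι) (F : ι → Lp ℝ 1 unitI) :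
    ⇑(∑ b ∈ s, F b) =ᵐ[unitI] fun t => ∑ b ∈ s, F b t := by
  classical
  induction s using Finset.induction_on with
  | empty => simp only [Finset.sum_empty]; exact Lp.coeFn_zero ℝ 1 unitI
  | @insert a s ha ih =>
    rw [Finset.sum_insert ha]
    filter_upwards [Lp.coeFn_add (F a) (∑ b ∈ s, F b), ih] with t h1 h2
    rw [h1]
    simp only [Pi.add_apply, Finset.sum_insert ha, h2]

def eb (k b : ℕ) : Lp ℝ 1 unitI :=
  indicatorConstLp 1 (measurableSet_J k b) (measure_ne_top unitI _) (1 : ℝ)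

lemma norm_eb {k b : ℕ} (hb : b < 2 ^ k) : ‖eb k b‖ = ((2 : ℝ) ^ k)⁻¹ := by
  rw [eb, norm_indicatorConstLp one_ne_zero ENNReal.one_ne_top, measureReal_def, unitI_J hb,
    ENNReal.toReal_ofReal (by positivity)]
  norm_num

lemma norm_sum_eb {k : ℕ} (c : ℕ → ℝ) :
    ‖∑ b ∈ Finset.range (2 ^ k), c b • eb k b‖
      = (∑ b ∈ Finset.range (2 ^ k), |c b|) / 2 ^ k := by
  classical
  set F := ∑ b ∈ Finset.range (2 ^ k), c b • eb k b with hF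
  set G : ℝ → ℝ :=
    fun t => ∑ b ∈ Finset.range (2 ^ k), c b * Set.indicator (J k b) (fun _ => (1 : ℝ)) t
    with hG
  have hterm : ∀ b ∈ Finset.range (2 ^ k),
      ⇑(c b • eb k b) =ᵐ[unitI]
        fun t => c b * Set.indicator (J k b) (fun _ => (1 : ℝ)) t := by
    intro b _
    refine (Lp.coeFn_smul (c b) (eb k b)).trans ?_
    filter_upwards [indicatorConstLp_coeFn (p := 1) (μ := unitI)
      (hs := measurableSet_J k b) (hμs := measure_ne_top unitI _) (c := (1 : ℝ))] with t ht
    simp only [Pi.smul_apply, eb, ht, smul_eq_mul]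
  have hcoe : ⇑F =ᵐ[unitI] G := by
    refine (Lp_coeFn_sum _ _).trans ?_
    have h := Filter.eventually_all_finite (Finset.range (2 ^ k)).finite_toSet |>.2
      fun b (hb : b ∈ (Finset.range (2 ^ k) : Set ℕ)) => hterm b hb
    filter_upwards [h] with t ht
    exact Finset.sum_congr rfl fun b hb => ht b hb
  have hnorm : ‖F‖ = ∫ t, ‖F t‖ ∂unitI :=
    L1.norm_eq_integral_norm (α := ℝ) (H := ℝ) (μ := unitI) F
  rw [hnorm, integral_congr_ae (by filter_upwards [hcoe] with t ht; rw [ht] :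
    (fun t => ‖F t‖) =ᵐ[unitI] fun t => ‖G t‖)]
  have hstep : ∀ b, b < 2 ^ k → ∀ t ∈ J k b, ‖G t‖ = |c b| := by
    intro b hb t ht
    have : G t = c b := by
      have hz : ∀ b' ∈ Finset.range (2 ^ k), b' ≠ b →
          c b' * Set.indicator (J k b') (fun _ => (1 : ℝ)) t = 0 := by
        intro b' _ hne
        have htb : t ∉ J k b' := Set.disjoint_right.1 (J_disjoint hne) ht
        rw [Set.indicator_of_notMem htb, mul_zero]
      simp only [hG]
      rw [Finset.sum_eq_single b hz (fun hmem => absurd (Finset.mem_range.2 hb) hmem),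
        Set.indicator_of_mem ht, mul_one]
    rw [this, Real.norm_eq_abs]
  exact integral_unitI_step k hstep

def gfun (k : ℕ) : ℝ → Lp ℝ 1 unitI := fun t =>
  ∑ b ∈ Finset.range (2 ^ k), Set.indicator (J k b) (fun _ => (2 ^ k : ℝ) • eb k b) t

lemma gfun_J {k a : ℕ} (ha : a < 2 ^ k) {t : ℝ} (ht : t ∈ J k a) :
    gfun k t = (2 ^ k : ℝ) • eb k a := by
  have hz : ∀ b ∈ Finset.range (2 ^ k), b ≠ a →
      Set.indicator (J k b) (fun _ => (2 ^ k : ℝ) • eb k b) t = 0 := by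
    intro b _ hne
    have htb : t ∉ J k b := Set.disjoint_right.1 (J_disjoint hne) ht
    exact Set.indicator_of_notMem htb _
  rw [gfun, Finset.sum_eq_single a hz (fun hmem => absurd (Finset.mem_range.2 ha) hmem),
    Set.indicator_of_mem ht]

lemma memL2_gfun (k : ℕ) : MemL2 (gfun k) := by
  rw [MemL2]
  exact memLp_finset_sum (p := 2) (μ := unitI) (Finset.range (2 ^ k))
    (f := fun b => Set.indicator (J k b) (fun _ => (2 ^ k : ℝ) • eb k b))
    (fun b _ => memLp_indicator_const 2 (measurableSet_J k b) _ (Or.inr (measure_ne_top _ _)))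

lemma walshCoeff_gfun {k i : ℕ} (hi : i < 2 ^ k) :
    walshCoeff (gfun k) i = ∑ b ∈ Finset.range (2 ^ k), wv k i b • eb k b := by
  rw [walshCoeff]
  have hpt : ∀ t, walsh i t • gfun k t
      = ∑ b ∈ Finset.range (2 ^ k),
          Set.indicator (J k b) (fun _ => wv k i b • ((2 ^ k : ℝ) • eb k b)) t := by
    intro t
    rw [gfun, Finset.smul_sum]
    refine Finset.sum_congr rfl fun b hb => ?_
    by_cases ht : t ∈ J k b
    · rw [Set.indicator_of_mem ht, Set.indicator_of_mem ht, walsh_J hi ht]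
    · rw [Set.indicator_of_notMem ht, Set.indicator_of_notMem ht, smul_zero]
  simp_rw [hpt]
  rw [integral_finset_sum _ (fun b _ =>
    (memLp_indicator_const 1 (measurableSet_J k b) _ (Or.inr (measure_ne_top _ _))).integrable
      le_rfl)]
  refine Finset.sum_congr rfl fun b hb => ?_
  rw [Finset.mem_range] at hb
  rw [integral_indicator_const _ (measurableSet_J k b), measureReal_def, unitI_J hb,
    ENNReal.toReal_ofReal (by positivity), smul_smul, smul_smul]
  congr 1
  have hp : (0 : ℝ) < 2 ^ k := by positivity
  field_simp

lemma walshSum_gfun {n k a : ℕ} (hn : n ≤ 2 ^ k) (ha : a < 2 ^ k) {t : ℝ} (ht : t ∈ J k a) :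
    walshSum n (gfun k) t = ∑ b ∈ Finset.range (2 ^ k), dn n k (a ^^^ b) • eb k b := by
  rw [walshSum]
  have h1 : ∀ i ∈ Finset.range n, walsh i t • walshCoeff (gfun k) i
      = ∑ b ∈ Finset.range (2 ^ k), (wv k i a * wv k i b) • eb k b := by
    intro i hi
    rw [Finset.mem_range] at hi
    have hik : i < 2 ^ k := lt_of_lt_of_le hi hn
    rw [walsh_J hik ht, walshCoeff_gfun hik, Finset.smul_sum]
    exact Finset.sum_congr rfl fun b _ => (smul_smul _ _ _)
  rw [Finset.sum_congr rfl h1, Finset.sum_comm]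
  refine Finset.sum_congr rfl fun b _ => ?_
  rw [← Finset.sum_smul, dn]
  congr 1
  exact Finset.sum_congr rfl fun i _ => wv_mul k i a b

lemma l2norm_gfun (k : ℕ) : l2norm (gfun k) = 1 := by
  rw [l2norm]
  have hstep : ∀ b, b < 2 ^ k → ∀ t ∈ J k b, ‖gfun k t‖ ^ 2 = 1 := by
    intro b hb t ht
    rw [gfun_J hb ht, norm_smul, Real.norm_eq_abs, norm_eb hb, abs_of_pos (by positivity :
      (0 : ℝ) < 2 ^ k)]
    have hp : (0 : ℝ) < 2 ^ k := by positivity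
    field_simp
  rw [integral_unitI_step k hstep, Finset.sum_const, Finset.card_range, nsmul_eq_mul, mul_one]
  have hp : (0 : ℝ) < 2 ^ k := by positivity
  rw [show ((2 ^ k : ℕ) : ℝ) = (2 : ℝ) ^ k by push_cast; ring, div_self hp.ne']
  exact Real.sqrt_one

lemma l2norm_walshSum_gfun {n k : ℕ} (hn : n ≤ 2 ^ k) :
    l2norm (walshSum n (gfun k)) = lebesgueConst n := by
  set L := lebesgueConst n with hL
  have hL0 : 0 ≤ L := lebesgueConst_nonneg n
  rw [l2norm]
  have hstep : ∀ a, a < 2 ^ k → ∀ t ∈ J k a, ‖walshSum n (gfun k) t‖ ^ 2 = L ^ 2 := by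
    intro a ha t ht
    rw [walshSum_gfun hn ha ht, norm_sum_eb, sum_xor ha (fun y => |dn n k y|),
      ← lebesgueConst_eq hn]
  rw [integral_unitI_step k hstep, Finset.sum_const, Finset.card_range, nsmul_eq_mul]
  have hp : (0 : ℝ) < 2 ^ k := by positivity
  have hcast : ((2 ^ k : ℕ) : ℝ) * L ^ 2 / 2 ^ k = L ^ 2 := by
    rw [show ((2 ^ k : ℕ) : ℝ) = (2 : ℝ) ^ k by push_cast; ring]
    field_simp
  rw [hcast, Real.sqrt_sq hL0]

end WalshAux

/-- For every `n ≥ 1`, `δ(L_1[0,1] | W_n, W_n) = L_n`, the `n`-th Lebesgue constant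
of the Walsh system. -/
theorem walshDelta_L1_eq_lebesgueConst (n : ℕ) (hn : 1 ≤ n) :
    walshDelta (ContinuousLinearMap.id ℝ (Lp ℝ 1 unitI)) n = lebesgueConst n := by
  classical
  have hnk : n ≤ 2 ^ n := Nat.lt_two_pow_self.le
  set L := lebesgueConst n with hL
  have hL0 : 0 ≤ L := WalshAux.lebesgueConst_nonneg n
  rw [walshDelta]
  have hid : ∀ f : ℝ → Lp ℝ 1 unitI,
      (fun t => (ContinuousLinearMap.id ℝ (Lp ℝ 1 unitI)) (walshSum n f t)) = walshSum n f :=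
    fun f => funext fun t => rfl
  have hmem : L ∈ {c : ℝ | 0 ≤ c ∧ ∀ f : ℝ → Lp ℝ 1 unitI, MemL2 f →
      l2norm (fun t => (ContinuousLinearMap.id ℝ (Lp ℝ 1 unitI)) (walshSum n f t))
        ≤ c * l2norm f} := by
    refine ⟨hL0, fun f hf => ?_⟩
    rw [hid f]
    exact WalshAux.upper hnk hf
  have hlb : ∀ c ∈ {c : ℝ | 0 ≤ c ∧ ∀ f : ℝ → Lp ℝ 1 unitI, MemL2 f →
      l2norm (fun t => (ContinuousLinearMap.id ℝ (Lp ℝ 1 unitI)) (walshSum n f t))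
        ≤ c * l2norm f}, L ≤ c := by
    intro c hc
    have h2 := hc.2 (WalshAux.gfun n) (WalshAux.memL2_gfun n)
    rw [hid, WalshAux.l2norm_walshSum_gfun hnk, WalshAux.l2norm_gfun, mul_one] at h2
    exact h2
  exact le_antisymm (csInf_le ⟨0, fun x hx => hx.1⟩ hmem) (le_csInf ⟨L, hmem⟩ hlb)

end
end

section
/- For every p ∈ ℕ one has p/8 ≤ L^max_{2^p} ≤ p, where L^max_n = max_{k ≤ n} L_k and L_k = ∫_0^1 |D_k(t)| dt is the k-th Lebesgue constant of the Walsh system. -/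
open MeasureTheory
open scoped ENNReal

noncomputable section

/-- `L^max_n = max_{1 ≤ k ≤ n} L_k`. -/
def lebesgueMax (n : ℕ) : ℝ :=
  sSup {d : ℝ | ∃ k, 1 ≤ k ∧ k ≤ n ∧ d = lebesgueConst k}

lemma abs_rademacher (i : ℕ) (t : ℝ) : |rademacher i t| = 1 := by
  unfold rademacher; split <;> simp

lemma measurable_rademacher (i : ℕ) : Measurable (rademacher i) := by
  unfold rademacher
  exact Measurable.ite
    (measurableSet_lt (measurable_fract.comp (measurable_const.mul measurable_id))
      measurable_const) measurable_const measurable_const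

lemma abs_walsh (n : ℕ) (t : ℝ) : |walsh n t| = 1 := by
  unfold walsh
  rw [Finset.abs_prod]
  apply Finset.prod_eq_one
  intro i _
  by_cases h : n.testBit i <;> simp [h, abs_rademacher]

lemma measurable_walsh (n : ℕ) : Measurable (walsh n) := by
  unfold walsh
  apply Finset.measurable_prod
  intro i _
  by_cases h : n.testBit i <;> simp [h, measurable_rademacher]

lemma measurable_dirichlet (n : ℕ) : Measurable (dirichlet n) := by
  unfold dirichlet
  exact Finset.measurable_sum _ fun i _ => measurable_walsh i

lemma abs_dirichlet_le (n : ℕ) (t : ℝ) : |dirichlet n t| ≤ n := by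
  unfold dirichlet
  calc |∑ i ∈ Finset.range n, walsh i t| ≤ ∑ i ∈ Finset.range n, |walsh i t| :=
        Finset.abs_sum_le_sum_abs _ _
    _ = n := by simp [abs_walsh]

instance : IsFiniteMeasure unitI := by
  constructor
  unfold unitI
  rw [Measure.restrict_apply_univ, Real.volume_Icc]
  norm_num

lemma integrableOn_bdd {f : ℝ → ℝ} (hf : Measurable f) {C : ℝ} (hC : ∀ t, |f t| ≤ C)
    {s : Set ℝ} (hs : volume s < ⊤) : IntegrableOn f s := by
  apply Integrable.mono' (g := fun _ => C)
  · exact integrableOn_const hs.ne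
  · exact hf.aestronglyMeasurable
  · exact ae_of_all _ fun t => hC t

lemma integrable_dirichlet (n : ℕ) : Integrable (dirichlet n) unitI := by
  apply Integrable.mono' (g := fun _ => (n : ℝ))
  · exact integrable_const _
  · exact (measurable_dirichlet n).aestronglyMeasurable
  · exact ae_of_all _ fun t => abs_dirichlet_le n t

lemma walsh_eq_prod (n N : ℕ) (h : n < 2 ^ N) (t : ℝ) :
    walsh n t = ∏ i ∈ Finset.range N, if n.testBit i then rademacher i t else 1 := by
  unfold walsh
  rcases le_total n N with hle | hle
  · exact Finset.prod_subset (Finset.range_subset_range.2 hle) fun i _ hi => by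
      have hni : n ≤ i := by simpa using hi
      have : n < 2 ^ i := lt_of_lt_of_le (Nat.lt_two_pow_self) (Nat.pow_le_pow_right (by norm_num) hni)
      simp [Nat.testBit_lt_two_pow this]
  · refine (Finset.prod_subset (Finset.range_subset_range.2 hle) fun i _ hi => ?_).symm
    have hNi : N ≤ i := by simpa using hi
    have : n < 2 ^ i := lt_of_lt_of_le h (Nat.pow_le_pow_right (by norm_num) hNi)
    simp [Nat.testBit_lt_two_pow this]

lemma walsh_two_pow_add (k m : ℕ) (hm : m < 2 ^ k) (t : ℝ) :
    walsh (2 ^ k + m) t = rademacher k t * walsh m t := by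
  have h1 : 2 ^ k + m < 2 ^ (k + 1) := by rw [pow_succ]; omega
  have h2 : m < 2 ^ (k + 1) := lt_of_lt_of_le hm (Nat.pow_le_pow_right (by norm_num) k.le_succ)
  rw [walsh_eq_prod _ (k + 1) h1, walsh_eq_prod m (k + 1) h2, Finset.prod_range_succ,
    Finset.prod_range_succ]
  have hmk : m.testBit k = false := Nat.testBit_lt_two_pow hm
  have hk : (2 ^ k + m).testBit k = true := by
    rw [Nat.testBit_two_pow_add_eq, hmk]; rfl
  rw [hk, hmk, if_pos rfl, if_neg (by simp)]
  have : ∀ i ∈ Finset.range k, (if (2 ^ k + m).testBit i then rademacher i t else 1)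
      = (if m.testBit i then rademacher i t else 1) := by
    intro i hi
    rw [Nat.testBit_two_pow_add_gt (Finset.mem_range.1 hi)]
  rw [Finset.prod_congr rfl this]
  ring

lemma dirichlet_two_pow_add (k m : ℕ) (hm : m ≤ 2 ^ k) (t : ℝ) :
    dirichlet (2 ^ k + m) t = dirichlet (2 ^ k) t + rademacher k t * dirichlet m t := by
  induction m with
  | zero => simp [dirichlet]
  | succ m ih =>
    have hm' : m < 2 ^ k := hm
    have : 2 ^ k + (m + 1) = (2 ^ k + m) + 1 := by omega
    rw [this]
    unfold dirichlet at *
    rw [Finset.sum_range_succ, ih hm'.le, Finset.sum_range_succ, walsh_two_pow_add k m hm' t]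
    ring

lemma dirichlet_two_pow_prod (k : ℕ) (t : ℝ) :
    dirichlet (2 ^ k) t = ∏ i ∈ Finset.range k, (1 + rademacher i t) := by
  induction k with
  | zero => simp [dirichlet, walsh]
  | succ k ih =>
    have : 2 ^ (k + 1) = 2 ^ k + 2 ^ k := by rw [pow_succ]; omega
    rw [this, dirichlet_two_pow_add k (2 ^ k) le_rfl t, ih, Finset.prod_range_succ]
    ring

lemma rademacher_eq_one {i k : ℕ} (hi : i < k) {t : ℝ} (ht0 : 0 ≤ t)
    (ht : t < ((2 : ℝ) ^ k)⁻¹) : rademacher i t = 1 := by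
  have hpos : (0:ℝ) < 2 ^ k := by positivity
  have h1 : (2:ℝ) ^ i * t < 1 / 2 := by
    have h2 : (2:ℝ) ^ i * t < 2 ^ i * (2 ^ k)⁻¹ := by
      apply mul_lt_mul_of_pos_left ht (by positivity)
    have h3 : (2:ℝ) ^ i * (2 ^ k)⁻¹ ≤ 1 / 2 := by
      have hp : (2:ℝ) ^ (i + 1) ≤ 2 ^ k := pow_le_pow_right₀ (by norm_num) hi
      rw [pow_succ] at hp
      rw [mul_inv_le_iff₀ hpos]
      linarith
    linarith
  have h0 : (0:ℝ) ≤ 2 ^ i * t := by positivity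
  unfold rademacher
  rw [if_pos]
  rw [Int.fract_eq_self.2 ⟨h0, by linarith⟩]
  exact h1

open Classical in
lemma exists_rademacher_neg {k : ℕ} {t : ℝ} (h1 : ((2 : ℝ) ^ k)⁻¹ ≤ t) (h2 : t < 1) :
    ∃ i < k, rademacher i t = -1 := by
  have hk : 1 ≤ k := by
    by_contra h
    push_neg at h
    interval_cases k
    simp at h1
    linarith
  have ht0 : (0:ℝ) < t := lt_of_lt_of_le (by positivity) h1
  have hwit : 1 / 2 ≤ 2 ^ (k - 1) * t := by
    have hsplit : (2:ℝ) ^ k = 2 ^ (k - 1) * 2 := by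
      rw [← pow_succ]
      congr 1
      omega
    have hpos : (0:ℝ) < 2 ^ (k - 1) := by positivity
    have key : (2:ℝ) ^ (k - 1) * (2 ^ k)⁻¹ = 1 / 2 := by
      rw [hsplit]
      field_simp
    calc (1:ℝ)/2 = 2 ^ (k-1) * (2 ^ k)⁻¹ := key.symm
      _ ≤ 2 ^ (k-1) * t := mul_le_mul_of_nonneg_left h1 hpos.le
  have hex : ∃ i : ℕ, 1 / 2 ≤ 2 ^ i * t := ⟨k - 1, hwit⟩
  set i := Nat.find hex with hidef
  have hPi : 1 / 2 ≤ 2 ^ i * t := Nat.find_spec hex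
  have hik : i ≤ k - 1 := Nat.find_min' hex hwit
  have hlt : (2:ℝ) ^ i * t < 1 := by
    rcases Nat.eq_zero_or_pos i with h0 | h0
    · rw [h0]; simpa using h2
    · have := Nat.find_min hex (m := i - 1) (by omega)
      push_neg at this
      have heq : (2:ℝ) ^ i = 2 * 2 ^ (i - 1) := by
        rw [← pow_succ']
        congr 1
        omega
      rw [heq]
      calc 2 * 2 ^ (i-1) * t = 2 * (2 ^ (i-1) * t) := by ring
        _ < 2 * (1/2) := by linarith
        _ = 1 := by norm_num
  refine ⟨i, by omega, ?_⟩
  unfold rademacher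
  rw [if_neg]
  rw [Int.fract_eq_self.2 ⟨by positivity, hlt⟩]
  linarith

lemma dirichlet_two_pow_eval (k : ℕ) {t : ℝ} (ht : t ∈ Set.Ico (0:ℝ) 1) :
    dirichlet (2 ^ k) t = if t < ((2 : ℝ) ^ k)⁻¹ then (2 : ℝ) ^ k else 0 := by
  obtain ⟨ht0, ht1⟩ := ht
  rw [dirichlet_two_pow_prod]
  split
  · next h =>
    have hc : ∀ i ∈ Finset.range k, (1 + rademacher i t) = 2 := by
      intro i hi
      rw [rademacher_eq_one (Finset.mem_range.1 hi) ht0 h]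
      norm_num
    rw [Finset.prod_congr rfl hc, Finset.prod_const, Finset.card_range]
  · next h =>
    push_neg at h
    obtain ⟨i, hik, hi⟩ := exists_rademacher_neg h ht1
    exact Finset.prod_eq_zero (Finset.mem_range.2 hik) (by rw [hi]; norm_num)

lemma integral_unitI (f : ℝ → ℝ) : ∫ t, f t ∂unitI = ∫ t in Set.Ico (0:ℝ) 1, f t := by
  unfold unitI
  exact (setIntegral_congr_set Ico_ae_eq_Icc).symm

lemma integrableOn_dirichlet_abs (n : ℕ) (s : Set ℝ) (hs : volume s < ⊤) :
    IntegrableOn (fun t => |dirichlet n t|) s := by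
  apply Integrable.mono' (g := fun _ => (n : ℝ))
  · exact integrableOn_const hs.ne
  · exact (measurable_dirichlet n).abs.aestronglyMeasurable
  · exact ae_of_all _ fun t => by simpa using abs_dirichlet_le n t

lemma volume_Ico_lt {a b : ℝ} : volume (Set.Ico a b) < ⊤ := by
  rw [Real.volume_Ico]; exact ENNReal.ofReal_lt_top

lemma setIntegral_abs_dirichlet_le (n : ℕ) {a b : ℝ} (hab : a ≤ b) :
    ∫ t in Set.Ico a b, |dirichlet n t| ≤ (b - a) * n := by
  have h := setIntegral_mono_on (μ := volume) (s := Set.Ico a b)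
    (f := fun t => |dirichlet n t|) (g := fun _ => (n : ℝ))
    (integrableOn_dirichlet_abs n _ volume_Ico_lt)
    (integrableOn_const volume_Ico_lt.ne) measurableSet_Ico
    (fun t _ => abs_dirichlet_le n t)
  calc ∫ t in Set.Ico a b, |dirichlet n t| ≤ ∫ _ in Set.Ico a b, (n : ℝ) := h
    _ = (b - a) * n := by
        rw [setIntegral_const, Real.volume_real_Ico_of_le hab, smul_eq_mul]

lemma setIntegral_abs_dirichlet_nonneg (n : ℕ) (s : Set ℝ) :
    0 ≤ ∫ t in s, |dirichlet n t| :=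
  integral_nonneg fun t => abs_nonneg _

lemma lebesgueConst_two_pow (k : ℕ) : lebesgueConst (2 ^ k) = 1 := by
  unfold lebesgueConst
  rw [integral_unitI]
  have hε0 : (0:ℝ) ≤ ((2:ℝ) ^ k)⁻¹ := by positivity
  have hε1 : ((2:ℝ) ^ k)⁻¹ ≤ 1 := by
    rw [inv_le_one_iff₀]
    right
    exact one_le_pow₀ (by norm_num)
  have heq : Set.EqOn (fun t => |dirichlet (2 ^ k) t|)
      (Set.indicator (Set.Ico (0:ℝ) (((2:ℝ) ^ k)⁻¹)) (fun _ => (2:ℝ) ^ k))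
      (Set.Ico (0:ℝ) 1) := by
    intro t ht
    simp only
    rw [dirichlet_two_pow_eval k ht, Set.indicator_apply]
    by_cases h : t < ((2:ℝ) ^ k)⁻¹
    · rw [if_pos h, if_pos ⟨ht.1, h⟩, abs_of_nonneg (by positivity)]
    · rw [if_neg h, if_neg (fun hc => h hc.2), abs_zero]
  rw [setIntegral_congr_fun measurableSet_Ico heq, setIntegral_indicator measurableSet_Ico,
    setIntegral_const, Set.Ico_inter_Ico]
  have : max (0:ℝ) 0 = 0 := by norm_num
  rw [this, min_eq_right hε1, Real.volume_real_Ico_of_le hε0, smul_eq_mul]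
  rw [sub_zero, inv_mul_cancel₀ (by positivity)]

lemma lebesgueConst_nonneg (n : ℕ) : 0 ≤ lebesgueConst n :=
  integral_nonneg fun _ => abs_nonneg _

lemma lebesgueConst_step (k m : ℕ) (hm : m ≤ 2 ^ k) :
    lebesgueConst (2 ^ k + m) ≤ 1 + lebesgueConst m := by
  unfold lebesgueConst
  have hpt : ∀ t, |dirichlet (2 ^ k + m) t| ≤ |dirichlet (2 ^ k) t| + |dirichlet m t| := by
    intro t
    rw [dirichlet_two_pow_add k m hm t]
    calc |dirichlet (2 ^ k) t + rademacher k t * dirichlet m t|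
        ≤ |dirichlet (2 ^ k) t| + |rademacher k t * dirichlet m t| := abs_add_le _ _
      _ = |dirichlet (2 ^ k) t| + |dirichlet m t| := by
          rw [abs_mul, abs_rademacher, one_mul]
  have h1 : ∫ t, |dirichlet (2 ^ k + m) t| ∂unitI
      ≤ ∫ t, (|dirichlet (2 ^ k) t| + |dirichlet m t|) ∂unitI := by
    apply integral_mono ((integrable_dirichlet _).abs)
      (((integrable_dirichlet _).abs).add ((integrable_dirichlet _).abs)) hpt
  have h2 : ∫ t, (|dirichlet (2 ^ k) t| + |dirichlet m t|) ∂unitI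
      = lebesgueConst (2 ^ k) + lebesgueConst m :=
    integral_add ((integrable_dirichlet _).abs) ((integrable_dirichlet _).abs)
  rw [← lebesgueConst_two_pow k]
  calc ∫ t, |dirichlet (2 ^ k + m) t| ∂unitI ≤ _ := h1
    _ = _ := h2

lemma lebesgueConst_upper (p : ℕ) (hp : 1 ≤ p) :
    ∀ n, 1 ≤ n → n ≤ 2 ^ p → lebesgueConst n ≤ p := by
  induction p with
  | zero => omega
  | succ p ih =>
    intro n hn1 hn2
    rcases Nat.eq_zero_or_pos p with hp0 | hp0
    · subst hp0
      interval_cases n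
      · have : (1:ℕ) = 2 ^ 0 := rfl
        rw [this, lebesgueConst_two_pow]
        norm_num
      · have : (2:ℕ) = 2 ^ 1 := rfl
        rw [this, lebesgueConst_two_pow]
        norm_num
    · rcases le_or_gt n (2 ^ p) with h | h
      · calc lebesgueConst n ≤ p := ih hp0 n hn1 h
          _ ≤ (p + 1 : ℕ) := by push_cast; linarith
      · have hm : n - 2 ^ p ≤ 2 ^ p := by
          have : 2 ^ (p + 1) = 2 ^ p + 2 ^ p := by rw [pow_succ]; omega
          omega
        have hrw : n = 2 ^ p + (n - 2 ^ p) := by omega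
        rcases Nat.eq_zero_or_pos (n - 2 ^ p) with h0 | h0
        · rw [hrw, h0, Nat.add_zero, lebesgueConst_two_pow]
          have : (1:ℝ) ≤ (p+1:ℕ) := by push_cast; linarith
          exact this
        · rw [hrw]
          calc lebesgueConst (2 ^ p + (n - 2 ^ p)) ≤ 1 + lebesgueConst (n - 2 ^ p) :=
              lebesgueConst_step p _ hm
            _ ≤ 1 + p := by linarith [ih hp0 (n - 2 ^ p) h0 hm]
            _ = (p + 1 : ℕ) := by push_cast; ring

def fineN : ℕ → ℕ
  | 0 => 0
  | k + 1 => 2 ^ (2 * k) + fineN k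

lemma fineN_three (k : ℕ) : 3 * fineN k < 2 ^ (2 * k) := by
  induction k with
  | zero => simp [fineN]
  | succ k ih =>
    have h : 2 ^ (2 * (k + 1)) = 4 * 2 ^ (2 * k) := by
      rw [show 2 * (k + 1) = 2 * k + 2 by ring, pow_add]
      ring
    simp only [fineN]
    omega

lemma fineN_pos {k : ℕ} (hk : 1 ≤ k) : 1 ≤ fineN k := by
  obtain ⟨j, rfl⟩ := Nat.exists_eq_add_of_le hk
  simp only [Nat.add_comm, fineN]
  have : 1 ≤ 2 ^ (2 * j) := Nat.one_le_two_pow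
  omega

lemma split_dirichlet_abs (n : ℕ) {ε : ℝ} (h0 : 0 ≤ ε) (h1 : ε ≤ 1) :
    ∫ t in Set.Ico (0:ℝ) 1, |dirichlet n t|
      = (∫ t in Set.Ico 0 ε, |dirichlet n t|) + ∫ t in Set.Ico ε 1, |dirichlet n t| := by
  rw [← Set.Ico_union_Ico_eq_Ico h0 h1,
    setIntegral_union (Set.Ico_disjoint_Ico_same) measurableSet_Ico
      (integrableOn_dirichlet_abs n _ volume_Ico_lt)
      (integrableOn_dirichlet_abs n _ volume_Ico_lt)]

lemma abs_add_ge (x y : ℝ) : |x| - |y| ≤ |x + y| := by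
  calc |x| - |y| = |x| - |-y| := by rw [abs_neg]
    _ ≤ |x - (-y)| := abs_sub_abs_le_abs_sub x (-y)
    _ = |x + y| := by rw [sub_neg_eq_add]

lemma lower_step (k : ℕ) :
    lebesgueConst (fineN k) + 1 / 3 ≤ lebesgueConst (fineN (k + 1)) := by
  set K := 2 * k with hK
  set a := fineN k with ha
  set ε : ℝ := ((2:ℝ) ^ K)⁻¹ with hε
  have hpow : (0:ℝ) < 2 ^ K := by positivity
  have hε0 : (0:ℝ) ≤ ε := by positivity
  have hε1 : ε ≤ 1 := by
    rw [hε, inv_le_one_iff₀]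
    right
    exact one_le_pow₀ (by norm_num)
  have haK : a ≤ 2 ^ K := by
    have h3 := fineN_three k
    rw [← hK] at h3
    omega
  have hthird : (ε - 0) * a ≤ 1 / 3 := by
    have h3 : (3:ℝ) * a ≤ 2 ^ K := by
      have h4 := fineN_three k
      rw [← hK] at h4
      have : (3 * a : ℕ) ≤ 2 ^ K := by omega
      calc (3:ℝ) * a = ((3 * a : ℕ) : ℝ) := by push_cast; ring
        _ ≤ ((2 ^ K : ℕ) : ℝ) := by exact_mod_cast this
        _ = 2 ^ K := by push_cast; ring
    rw [sub_zero, hε, mul_comm, mul_inv_le_iff₀ hpow]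
    linarith
  have hIa : ∫ t in Set.Ico (0:ℝ) ε, |dirichlet a t| ≤ 1 / 3 :=
    le_trans (setIntegral_abs_dirichlet_le a hε0) hthird
  have hfN : fineN (k + 1) = 2 ^ K + a := rfl
  -- the two pieces
  have hI2 : ∫ t in Set.Ico ε 1, |dirichlet (2 ^ K + a) t|
      = ∫ t in Set.Ico ε 1, |dirichlet a t| := by
    apply setIntegral_congr_fun measurableSet_Ico
    intro t ht
    show |dirichlet (2 ^ K + a) t| = |dirichlet a t|
    have ht' : t ∈ Set.Ico (0:ℝ) 1 := ⟨le_trans hε0 ht.1, ht.2⟩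
    have hz : dirichlet (2 ^ K) t = 0 := by
      rw [dirichlet_two_pow_eval K ht', if_neg (not_lt.2 ht.1)]
    rw [dirichlet_two_pow_add K a haK t, hz, zero_add, abs_mul, abs_rademacher, one_mul]
  have hI1 : 1 - 1/3 ≤ ∫ t in Set.Ico (0:ℝ) ε, |dirichlet (2 ^ K + a) t| := by
    have hmono : ∫ t in Set.Ico (0:ℝ) ε, ((2:ℝ) ^ K - |dirichlet a t|)
        ≤ ∫ t in Set.Ico (0:ℝ) ε, |dirichlet (2 ^ K + a) t| := by
      apply setIntegral_mono_on
      · exact (integrableOn_const volume_Ico_lt.ne).sub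
          (integrableOn_dirichlet_abs a _ volume_Ico_lt)
      · exact integrableOn_dirichlet_abs _ _ volume_Ico_lt
      · exact measurableSet_Ico
      · intro t ht
        have ht' : t ∈ Set.Ico (0:ℝ) 1 := ⟨ht.1, lt_of_lt_of_le ht.2 hε1⟩
        have hz : dirichlet (2 ^ K) t = (2:ℝ) ^ K := by
          rw [dirichlet_two_pow_eval K ht', if_pos ht.2]
        rw [dirichlet_two_pow_add K a haK t, hz]
        calc (2:ℝ) ^ K - |dirichlet a t|
            = |(2:ℝ) ^ K| - |rademacher K t * dirichlet a t| := by
              rw [abs_of_pos hpow, abs_mul, abs_rademacher, one_mul]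
          _ ≤ |(2:ℝ) ^ K + rademacher K t * dirichlet a t| := abs_add_ge _ _
    have hval : ∫ t in Set.Ico (0:ℝ) ε, ((2:ℝ) ^ K - |dirichlet a t|)
        = ε * 2 ^ K - ∫ t in Set.Ico (0:ℝ) ε, |dirichlet a t| := by
      rw [integral_sub (integrableOn_const (C := (2:ℝ) ^ K) (volume_Ico_lt (a := 0) (b := ε)).ne)
        (integrableOn_dirichlet_abs a _ volume_Ico_lt), setIntegral_const, Real.volume_real_Ico_of_le hε0,
        smul_eq_mul, sub_zero]
    have hεK : ε * 2 ^ K = 1 := inv_mul_cancel₀ (ne_of_gt hpow)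
    rw [hval, hεK] at hmono
    linarith
  -- assemble
  unfold lebesgueConst
  rw [integral_unitI, integral_unitI, hfN, split_dirichlet_abs (2 ^ K + a) hε0 hε1,
    split_dirichlet_abs a hε0 hε1, hI2]
  linarith

lemma lebesgueConst_lower (k : ℕ) (hk : 1 ≤ k) :
    ((k : ℝ) + 2) / 3 ≤ lebesgueConst (fineN k) := by
  induction k, hk using Nat.le_induction with
  | base =>
    have h1 : fineN 1 = 2 ^ 0 := rfl
    rw [h1, lebesgueConst_two_pow]
    norm_num
  | succ k hk ih =>
    have := lower_step k
    push_cast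
    push_cast at ih
    linarith


/-- **Lemma (Fine).** For every `p ≥ 1`, `p/8 ≤ L^max_{2^p} ≤ p`. -/
theorem lebesgueMax_growth (p : ℕ) (hp : 1 ≤ p) :
    (p : ℝ) / 8 ≤ lebesgueMax (2 ^ p) ∧ lebesgueMax (2 ^ p) ≤ p := by
  set S := {d : ℝ | ∃ k, 1 ≤ k ∧ k ≤ 2 ^ p ∧ d = lebesgueConst k} with hS
  have hbdd : ∀ d ∈ S, d ≤ (p : ℝ) := by
    rintro d ⟨k, hk1, hk2, rfl⟩
    exact lebesgueConst_upper p hp k hk1 hk2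
  have hne : S.Nonempty := ⟨lebesgueConst 1, 1, le_refl 1, Nat.one_le_two_pow, rfl⟩
  constructor
  · -- lower bound
    set k := (p + 1) / 2 with hkdef
    have hk1 : 1 ≤ k := by omega
    have h2k : p ≤ 2 * k := by omega
    have h2k' : 2 * k ≤ p + 1 := by omega
    have hmem : lebesgueConst (fineN k) ∈ S := by
      refine ⟨fineN k, fineN_pos hk1, ?_, rfl⟩
      have h3 := fineN_three k
      have hle : 2 ^ (2 * k) ≤ 2 ^ (p + 1) := Nat.pow_le_pow_right (by norm_num) h2k'
      have : 2 ^ (p + 1) = 2 * 2 ^ p := by rw [pow_succ]; ring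
      omega
    have hle : lebesgueConst (fineN k) ≤ lebesgueMax (2 ^ p) :=
      le_csSup ⟨(p : ℝ), hbdd⟩ hmem
    have hlow := lebesgueConst_lower k hk1
    have hcast : (p : ℝ) ≤ 2 * k := by exact_mod_cast h2k
    calc (p : ℝ) / 8 ≤ ((k : ℝ) + 2) / 3 := by linarith
      _ ≤ lebesgueConst (fineN k) := hlow
      _ ≤ lebesgueMax (2 ^ p) := hle
  · exact csSup_le hne hbdd


end
end
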